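/- Let S be a closed subsemigroup of B(Z) with Lie wedge L(S), and let γ : [0,ε] → S be a C¹ curve with γ(0) = id. Then γ'(0) ∈ L(S). (Characterization: A ∈ L(S) iff A = γ'(0) for some such curve.) -/

import Mathlib

open NormedSpace

section aux
set_option linter.unusedSectionVars false
variable {𝔸 : Type*} [NormedRing 𝔸] [NormedAlgebra ℝ 𝔸] [CompleteSpace 𝔸] [NormOneClass 𝔸]

lemma aux_norm_pow_le (a : 𝔸) (n : ℕ) : ‖a ^ n‖ ≤ ‖a‖ ^ n := by
  cases n with
  | zero => simp
  | succ n => exact norm_pow_le' a n.succ_pos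

lemma aux_hasSum_real (r : ℝ) : HasSum (fun n : ℕ => r ^ n / n.factorial) (Real.exp r) := by
  rw [Real.exp_eq_exp_ℝ]
  exact expSeries_div_hasSum_exp r

lemma aux_norm_exp_le (x : 𝔸) : ‖exp x‖ ≤ Real.exp ‖x‖ := by
  have h := exp_series_hasSum_exp' (𝕂 := ℝ) x
  rw [← h.tsum_eq]
  refine tsum_of_norm_bounded (aux_hasSum_real ‖x‖) fun n => ?_
  rw [norm_smul, Real.norm_eq_abs, abs_inv, Nat.abs_cast, div_eq_inv_mul]
  gcongr
  exact aux_norm_pow_le x n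

lemma aux_exp_remainder (x : 𝔸) : ‖exp x - 1 - x‖ ≤ ‖x‖ ^ 2 * Real.exp ‖x‖ := by
  have h := exp_series_hasSum_exp' (𝕂 := ℝ) x
  have h2 : HasSum (fun n : ℕ => ((n + 2).factorial⁻¹ : ℝ) • x ^ (n + 2))
      (exp x - 1 - x) := by
    rw [hasSum_nat_add_iff (f := fun n : ℕ => ((n.factorial : ℝ)⁻¹ : ℝ) • x ^ n) 2]
    convert h using 1
    · rfl
    simp [Finset.sum_range_succ]
    try abel
  rw [← h2.tsum_eq]
  refine tsum_of_norm_bounded ((aux_hasSum_real ‖x‖).mul_left (‖x‖ ^ 2)) fun n => ?_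
  rw [norm_smul, Real.norm_eq_abs, abs_inv, Nat.abs_cast]
  have hf : ((n + 2).factorial : ℝ)⁻¹ ≤ ((n.factorial : ℝ))⁻¹ := by
    apply inv_anti₀
    · exact_mod_cast n.factorial_pos
    · exact_mod_cast Nat.factorial_le (by omega)
  calc ((n + 2).factorial : ℝ)⁻¹ * ‖x ^ (n + 2)‖
      ≤ ((n.factorial : ℝ))⁻¹ * ‖x‖ ^ (n + 2) :=
        mul_le_mul hf (aux_norm_pow_le x (n + 2)) (norm_nonneg _) (by positivity)
    _ = ‖x‖ ^ 2 * (‖x‖ ^ n / n.factorial) := by ring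

lemma aux_pow_sub_pow (x y : 𝔸) (M : ℝ) (hM : 1 ≤ M) (hx : ‖x‖ ≤ M) (hy : ‖y‖ ≤ M) :
    ∀ n : ℕ, ‖x ^ n - y ^ n‖ ≤ n * M ^ n * ‖x - y‖ := by
  have hM0 : 0 ≤ M := le_trans zero_le_one hM
  intro n
  induction n with
  | zero => simp
  | succ n ih =>
    have key : x ^ (n + 1) - y ^ (n + 1) = x ^ n * (x - y) + (x ^ n - y ^ n) * y := by
      rw [pow_succ, pow_succ]
      noncomm_ring
    rw [key]
    have hxn : ‖x ^ n‖ ≤ M ^ n := le_trans (aux_norm_pow_le x n) (by gcongr)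
    calc ‖x ^ n * (x - y) + (x ^ n - y ^ n) * y‖
        ≤ ‖x ^ n * (x - y)‖ + ‖(x ^ n - y ^ n) * y‖ := norm_add_le _ _
      _ ≤ ‖x ^ n‖ * ‖x - y‖ + ‖x ^ n - y ^ n‖ * ‖y‖ := by
          gcongr <;> exact norm_mul_le _ _
      _ ≤ M ^ n * ‖x - y‖ + (↑n * M ^ n * ‖x - y‖) * M := by gcongr
      _ ≤ M ^ (n + 1) * ‖x - y‖ + (↑n * M ^ n * ‖x - y‖) * M := by
          exact add_le_add (mul_le_mul_of_nonneg_right (pow_le_pow_right₀ hM n.le_succ) (norm_nonneg (x - y))) le_rfl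
      _ = (↑(n + 1) : ℕ) * M ^ (n + 1) * ‖x - y‖ := by push_cast; ring

end aux

set_option maxHeartbeats 1000000 in
open Filter in
theorem stmt_5 {Z : Type*} [NormedAddCommGroup Z] [NormedSpace ℝ Z] [FiniteDimensional ℝ Z]
    (S : Set (Z →L[ℝ] Z)) (hSclosed : IsClosed S) (hid : ContinuousLinearMap.id ℝ Z ∈ S)
    (hmul : ∀ A ∈ S, ∀ B ∈ S, A.comp B ∈ S)
    (ε : ℝ) (hε : 0 < ε) (γ : ℝ → (Z →L[ℝ] Z)) (A : Z →L[ℝ] Z)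
    (hγS : ∀ t ∈ Set.Icc (0:ℝ) ε, γ t ∈ S)
    (hγ0 : γ 0 = ContinuousLinearMap.id ℝ Z)
    (hγC1 : HasDerivWithinAt γ A (Set.Icc (0:ℝ) ε) 0) :
    ∀ t : ℝ, 0 ≤ t → exp (t • A) ∈ S := by
  intro t ht
  rcases subsingleton_or_nontrivial Z with hZ | hZ
  · have : exp (t • A) = ContinuousLinearMap.id ℝ Z := Subsingleton.elim _ _
    rw [this]; exact hid
  rcases eq_or_lt_of_le ht with h0 | htpos
  · rw [← h0, zero_smul, exp_zero]; exact hid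
  have hS1 : (1 : Z →L[ℝ] Z) ∈ S := hid
  have hpow : ∀ x ∈ S, ∀ n : ℕ, x ^ n ∈ S := by
    intro x hx n
    induction n with
    | zero => simpa using hS1
    | succ n ih => rw [pow_succ]; exact hmul _ ih _ hx
  set c : ℝ := ‖A‖ with hc
  have hc0 : 0 ≤ c := norm_nonneg A
  -- the little-o property of γ at 0
  have hlo0 : (fun s => γ s - 1 - s • A) =o[nhdsWithin 0 (Set.Icc (0:ℝ) ε)] fun s => s := by
    have h := hasDerivWithinAt_iff_isLittleO.mp hγC1
    simpa [hγ0, ← ContinuousLinearMap.one_def, sub_zero] using h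
  have hIcc : ∀ᶠ n : ℕ in atTop, t / n ∈ Set.Icc (0:ℝ) ε := by
    have h1 : ∀ᶠ n : ℕ in atTop, t / n < ε :=
      (tendsto_const_div_atTop_nhds_zero_nat t).eventually (eventually_lt_nhds hε)
    filter_upwards [h1] with n hn
    exact ⟨div_nonneg ht (Nat.cast_nonneg n), hn.le⟩
  have htend : Tendsto (fun n : ℕ => t / n) atTop (nhdsWithin 0 (Set.Icc (0:ℝ) ε)) := by
    rw [tendsto_nhdsWithin_iff]
    exact ⟨tendsto_const_div_atTop_nhds_zero_nat t, hIcc⟩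
  have hlo : (fun n : ℕ => γ (t / n) - 1 - (t / n) • A) =o[atTop] fun n : ℕ => t / n :=
    hlo0.comp_tendsto htend
  -- first error term
  have h1 : Tendsto (fun n : ℕ => (n : ℝ) * ‖γ (t / n) - 1 - (t / n) • A‖) atTop (nhds 0) := by
    have hdiv : Tendsto (fun n : ℕ => ‖γ (t / n) - 1 - (t / n) • A‖ / (t / n)) atTop (nhds 0) := by
      have h := hlo.norm_left
      have h2 := h.tendsto_div_nhds_zero
      simpa using h2
    have h3 := hdiv.mul_const t
    rw [zero_mul] at h3
    apply h3.congr'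
    filter_upwards [eventually_ge_atTop 1] with n hn
    have hne : (n : ℝ) ≠ 0 := Nat.cast_ne_zero.mpr (by omega)
    have ht0 : t ≠ 0 := ne_of_gt htpos
    field_simp
  -- second error term
  have h2 : Tendsto (fun n : ℕ => (n : ℝ) * ‖exp ((t / n) • A) - 1 - (t / n) • A‖)
      atTop (nhds 0) := by
    apply squeeze_zero' (g := fun n : ℕ => t ^ 2 * c ^ 2 * Real.exp (t * c) / n)
    · filter_upwards with n
      positivity
    · filter_upwards [eventually_ge_atTop 1] with n hn
      have hn0 : (0:ℝ) < n := by exact_mod_cast Nat.pos_of_ne_zero (by omega)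
      have hnorm : ‖(t / n) • A‖ = (t / n) * c := by
        rw [norm_smul (t / (n:ℝ)) A, Real.norm_eq_abs,
          abs_of_nonneg (div_nonneg ht (Nat.cast_nonneg n))]
      have hb := aux_exp_remainder ((t / n) • A)
      rw [hnorm] at hb
      have hn1 : (1:ℝ) ≤ n := by exact_mod_cast hn
      have htn : t / n ≤ t := by
        rw [div_le_iff₀ hn0]
        nlinarith
      have hexp : Real.exp (t / n * c) ≤ Real.exp (t * c) :=
        Real.exp_le_exp.mpr (mul_le_mul_of_nonneg_right htn hc0)
      calc (n : ℝ) * ‖exp ((t / n) • A) - 1 - (t / n) • A‖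
          ≤ (n : ℝ) * ((t / n * c) ^ 2 * Real.exp (t / n * c)) := by
            exact mul_le_mul_of_nonneg_left hb (le_of_lt hn0)
        _ ≤ (n : ℝ) * ((t / n * c) ^ 2 * Real.exp (t * c)) := by
            gcongr
        _ = t ^ 2 * c ^ 2 * Real.exp (t * c) / n := by
            field_simp
    · exact tendsto_const_div_atTop_nhds_zero_nat _
  -- combine
  set K : ℝ := t * (c + 1) with hK
  have hK0 : 0 ≤ K := by positivity
  have hbnd := hlo.def one_pos
  have hkey : ∀ᶠ n : ℕ in atTop,
      ‖γ (t / n) ^ n - exp (t • A)‖ ≤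
        Real.exp K * ((n : ℝ) * ‖γ (t / n) - 1 - (t / n) • A‖
          + (n : ℝ) * ‖exp ((t / n) • A) - 1 - (t / n) • A‖) := by
    filter_upwards [eventually_ge_atTop 1, hbnd] with n hn hb
    have hn0 : (0:ℝ) < n := by exact_mod_cast Nat.pos_of_ne_zero (by omega)
    have htn0 : 0 ≤ t / n := div_nonneg ht (Nat.cast_nonneg n)
    set x := γ (t / n) with hx
    set y := exp ((t / n) • A) with hy
    set Mn : ℝ := Real.exp (K / n) with hMn
    have hnormsmul : ‖(t / n) • A‖ = (t / n) * c := by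
      rw [norm_smul (t / (n:ℝ)) A, Real.norm_eq_abs, abs_of_nonneg htn0]
    have hKn : K / n = t / n * (c + 1) := by field_simp; exact hK
    have hMn1 : (1:ℝ) ≤ Mn := Real.one_le_exp (by positivity)
    have hxM : ‖x‖ ≤ Mn := by
      have hxeq : x = 1 + (t / n) • A + (x - 1 - (t / n) • A) := by abel
      calc ‖x‖ = ‖1 + (t / n) • A + (x - 1 - (t / n) • A)‖ := by rw [← hxeq]
        _ ≤ ‖(1 : Z →L[ℝ] Z)‖ + ‖(t / n) • A‖ + ‖x - 1 - (t / n) • A‖ :=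
            le_trans (norm_add_le _ _) (by gcongr; exact norm_add_le _ _)
        _ ≤ 1 + (t / n) * c + t / n := by
            rw [norm_one, hnormsmul]
            gcongr
            rw [one_mul, Real.norm_eq_abs, abs_of_nonneg htn0] at hb
            exact hb
        _ = K / n + 1 := by rw [hKn]; ring
        _ ≤ Mn := Real.add_one_le_exp _
    have hyM : ‖y‖ ≤ Mn := by
      calc ‖y‖ ≤ Real.exp ‖(t / n) • A‖ := aux_norm_exp_le _
        _ ≤ Mn := by
            apply Real.exp_le_exp.mpr
            rw [hnormsmul, hKn]
            nlinarith
    have hne : (n : ℝ) ≠ 0 := ne_of_gt hn0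
    have hnn : (n : ℝ) * (t / n) = t := by field_simp
    have hsc : (n : ℝ) • ((t / n) • A) = t • A := by rw [smul_smul, hnn]
    have hexppow : exp (t • A) = y ^ n := by
      letI : NormedAlgebra ℚ (Z →L[ℝ] Z) := NormedAlgebra.restrictScalars ℚ ℝ (Z →L[ℝ] Z)
      rw [hy, ← exp_nsmul, ← Nat.cast_smul_eq_nsmul ℝ, hsc]
    have hKn2 : (n : ℝ) * (K / n) = K := by field_simp
    have hMpow : Mn ^ n = Real.exp K := by
      rw [hMn, ← Real.exp_nat_mul, hKn2]
    have hxy : ‖x - y‖ ≤ ‖x - 1 - (t / n) • A‖ + ‖y - 1 - (t / n) • A‖ := by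
      have : x - y = (x - 1 - (t / n) • A) - (y - 1 - (t / n) • A) := by abel
      rw [this]
      exact norm_sub_le _ _
    calc ‖x ^ n - exp (t • A)‖ = ‖x ^ n - y ^ n‖ := by rw [hexppow]
      _ ≤ (n : ℝ) * Mn ^ n * ‖x - y‖ := aux_pow_sub_pow x y Mn hMn1 hxM hyM n
      _ = Real.exp K * ((n : ℝ) * ‖x - y‖) := by rw [hMpow]; ring
      _ ≤ Real.exp K * ((n : ℝ) * (‖x - 1 - (t / n) • A‖ + ‖y - 1 - (t / n) • A‖)) := by
          gcongr
      _ = Real.exp K * ((n : ℝ) * ‖x - 1 - (t / n) • A‖ + (n : ℝ) * ‖y - 1 - (t / n) • A‖) := by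
          ring
  have hzero : Tendsto (fun n : ℕ => ‖γ (t / n) ^ n - exp (t • A)‖) atTop (nhds 0) := by
    have hg : Tendsto (fun n : ℕ => Real.exp K * ((n : ℝ) * ‖γ (t / n) - 1 - (t / n) • A‖
        + (n : ℝ) * ‖exp ((t / n) • A) - 1 - (t / n) • A‖)) atTop (nhds 0) := by
      have := (h1.add h2).const_mul (Real.exp K)
      simpa using this
    exact squeeze_zero' (by filter_upwards with n; positivity) hkey hg
  have hconv : Tendsto (fun n : ℕ => γ (t / n) ^ n) atTop (nhds (exp (t • A))) :=
    tendsto_iff_norm_sub_tendsto_zero.mpr hzero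
  have hmem : ∀ᶠ n : ℕ in atTop, γ (t / n) ^ n ∈ S := by
    filter_upwards [hIcc] with n hn
    exact hpow _ (hγS _ hn) n
  exact hSclosed.mem_of_tendsto hconv hmem
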